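/- Let A be an integral domain with field of fractions K. If there exists a surjective demi-valuation ν : K* → ⊕_{i∈I} ℤ (direct sum of copies of ℤ with componentwise ordering) such that R(ν) = A, then A is a unique factorization domain. -/

import Mathlib

/-- If a domain A admits a surjective ℤ-divisor demi-valuation on its fraction field
with valuation ring A, then A is a UFD. -/
theorem stmt_4 {A K : Type*} [CommRing A] [IsDomain A]
    [Field K] [Algebra A K] [IsFractionRing A K]
    (I : Type*) (ν : K → (I →₀ ℤ))
    (hmul : ∀ a b : K, a ≠ 0 → b ≠ 0 → ν (a * b) = ν a + ν b)
    (hadd : ∀ a b : K, a ≠ 0 → b ≠ 0 → a + b ≠ 0 → ∀ i, min (ν a i) (ν b i) ≤ ν (a + b) i)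
    (hsurj : ∀ g : I →₀ ℤ, ∃ x : K, x ≠ 0 ∧ ν x = g)
    (hR : ∀ x : K, (x = 0 ∨ (x ≠ 0 ∧ ∀ i, 0 ≤ ν x i)) ↔ x ∈ Set.range (algebraMap A K)) :
    UniqueFactorizationMonoid A := by
  classical
  set ι := algebraMap A K with hιdef
  have hinj : Function.Injective ι := IsFractionRing.injective A K
  have hne : ∀ a : A, a ≠ 0 → ι a ≠ 0 := by
    intro a ha h
    exact ha (hinj (h.trans (map_zero ι).symm))
  -- ν 1 = 0
  have hν1 : ν 1 = 0 := by
    have h := hmul 1 1 one_ne_zero one_ne_zero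
    rw [mul_one] at h
    exact left_eq_add.mp h
  have hνinv : ∀ x : K, x ≠ 0 → ν x⁻¹ = - ν x := by
    intro x hx
    have h := hmul x x⁻¹ hx (inv_ne_zero hx)
    rw [mul_inv_cancel₀ hx, hν1] at h
    exact (neg_eq_of_add_eq_zero_right h.symm).symm
  -- membership
  have hmemA : ∀ x : K, x ≠ 0 → (∀ i, 0 ≤ ν x i) → ∃ a : A, ι a = x := by
    intro x hx h
    obtain ⟨a, ha⟩ := (hR x).mp (Or.inr ⟨hx, h⟩)
    exact ⟨a, ha⟩
  have hνA : ∀ a : A, a ≠ 0 → ∀ i, 0 ≤ ν (ι a) i := by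
    intro a ha i
    rcases (hR (ι a)).mpr ⟨a, rfl⟩ with h | h
    · exact absurd h (hne a ha)
    · exact h.2 i
  -- divisibility from componentwise inequality of valuations
  have hdvd : ∀ a b : A, a ≠ 0 → b ≠ 0 → (∀ i, ν (ι a) i ≤ ν (ι b) i) → a ∣ b := by
    intro a b ha hb hle
    have hxa := hne a ha
    have hxb := hne b hb
    obtain ⟨c, hc⟩ := hmemA (ι b * (ι a)⁻¹)
      (mul_ne_zero hxb (inv_ne_zero hxa)) (by
        intro i
        rw [hmul _ _ hxb (inv_ne_zero hxa), hνinv _ hxa]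
        have := hle i
        simp only [Finsupp.add_apply, Finsupp.neg_apply]
        omega)
    refine ⟨c, hinj ?_⟩
    rw [map_mul, hc, mul_comm (ι b), ← mul_assoc, mul_inv_cancel₀ hxa, one_mul]
  -- the prime elements
  have hπ : ∀ i : I, ∃ a : A, a ≠ 0 ∧ ν (ι a) = Finsupp.single i 1 := by
    intro i
    obtain ⟨x, hx, hνx⟩ := hsurj (Finsupp.single i 1)
    obtain ⟨a, ha⟩ := hmemA x hx (by
      intro j
      rw [hνx, Finsupp.single_apply]
      split <;> norm_num)
    exact ⟨a, fun h => hx (by rw [← ha, h, map_zero]), by rw [ha, hνx]⟩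
  choose π hπ0 hπν using hπ
  have hπprime : ∀ i, Prime (π i) := by
    intro i
    refine ⟨hπ0 i, ?_, ?_⟩
    · intro hu
      obtain ⟨b, hb⟩ := isUnit_iff_exists_inv.mp hu
      have hb0 : b ≠ 0 := by
        rintro rfl
        rw [mul_zero] at hb
        exact zero_ne_one hb
      have h := hmul (ι (π i)) (ι b) (hne _ (hπ0 i)) (hne _ hb0)
      rw [← map_mul, hb, map_one, hν1] at h
      have h1 := DFunLike.congr_fun h i
      have h2 := DFunLike.congr_fun (hπν i) i
      have h3 := hνA b hb0 i
      simp only [Finsupp.coe_zero, Pi.zero_apply, Finsupp.add_apply,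
        Finsupp.single_eq_same] at h1 h2
      omega
    · intro a b hab
      by_cases ha : a = 0
      · exact Or.inl (by simp [ha])
      by_cases hb : b = 0
      · exact Or.inr (by simp [hb])
      obtain ⟨c, hc⟩ := hab
      have hc0 : c ≠ 0 := by
        rintro rfl
        rw [mul_zero] at hc
        exact mul_ne_zero ha hb hc
      have h := hmul (ι a) (ι b) (hne a ha) (hne b hb)
      rw [← map_mul, hc, map_mul, hmul (ι (π i)) (ι c) (hne _ (hπ0 i)) (hne _ hc0)] at h
      have hi := DFunLike.congr_fun h i
      have h2 := DFunLike.congr_fun (hπν i) i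
      simp only [Finsupp.add_apply, Finsupp.single_eq_same] at hi h2
      have hci := hνA c hc0 i
      have key : 1 ≤ ν (ι a) i ∨ 1 ≤ ν (ι b) i := by omega
      have step : ∀ d : A, d ≠ 0 → 1 ≤ ν (ι d) i → π i ∣ d := by
        intro d hd hdi
        refine hdvd _ _ (hπ0 i) hd ?_
        intro j
        rw [hπν i, Finsupp.single_apply]
        rcases eq_or_ne i j with rfl | hij
        · simpa using hdi
        · have := hνA d hd j
          simp [hij]
          omega
      rcases key with hk | hk
      · exact Or.inl (step a ha hk)
      · exact Or.inr (step b hb hk)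
  -- ν of powers
  have hνpow : ∀ x : K, x ≠ 0 → ∀ k : ℕ, ν (x ^ k) = k • ν x := by
    intro x hx k
    induction k with
    | zero => simpa using hν1
    | succ n ih => rw [pow_succ, hmul _ _ (pow_ne_zero n hx) hx, ih, succ_nsmul]
  -- key existence, by induction on finsupps over ℕ
  have hkey : ∀ n : I →₀ ℕ, ∃ s : Multiset A, (∀ b ∈ s, Prime b) ∧ s.prod ≠ 0 ∧
      ν (ι s.prod) = n.mapRange (Nat.cast) Nat.cast_zero := by
    intro n
    induction n using Finsupp.induction with
    | zero =>
      refine ⟨0, by simp, one_ne_zero, ?_⟩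
      simp [hν1]
    | single_add a k f ha hk ih =>
      obtain ⟨s, hs, hs0, hsν⟩ := ih
      refine ⟨Multiset.replicate k (π a) + s, ?_, ?_, ?_⟩
      · intro b hb
        rcases Multiset.mem_add.mp hb with h | h
        · rw [Multiset.eq_of_mem_replicate h]; exact hπprime a
        · exact hs b h
      · rw [Multiset.prod_add, Multiset.prod_replicate]
        exact mul_ne_zero (pow_ne_zero k (hπ0 a)) hs0
      · rw [Multiset.prod_add, Multiset.prod_replicate, map_mul, map_pow,
          hmul _ _ (pow_ne_zero k (hne _ (hπ0 a))) (hne _ hs0),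
          hνpow _ (hne _ (hπ0 a)) k, hπν a, hsν]
        ext j
        simp only [Finsupp.add_apply, Finsupp.smul_apply, Finsupp.mapRange_apply,
          Finsupp.single_apply]
        split <;> simp
  -- conclude
  refine UniqueFactorizationMonoid.of_exists_prime_factors ?_
  intro a ha
  have hg0 : ∀ i, 0 ≤ ν (ι a) i := hνA a ha
  obtain ⟨s, hs, hs0, hsν⟩ := hkey ((ν (ι a)).mapRange Int.toNat Int.toNat_zero)
  refine ⟨s, hs, ?_⟩
  have heq : ν (ι s.prod) = ν (ι a) := by
    rw [hsν]
    ext j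
    simp only [Finsupp.mapRange_apply]
    exact Int.toNat_of_nonneg (hg0 j)
  exact associated_of_dvd_dvd
    (hdvd s.prod a hs0 ha (fun i => (heq ▸ le_refl _)))
    (hdvd a s.prod ha hs0 (fun i => (heq ▸ le_refl _)))
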